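/- In B = 𝔽₂[a,u][v,v⁻¹][c,b]/(c² + a·c + u·b), with ē_a = v·(a·b + b·c), ē_λ = a·c + u·b, ē_ρ = v·b², one has ē_λ² = u²·v⁻¹·ē_ρ + a²·ē_λ and ē_a² = v·ē_λ·ē_ρ + v·a²·ē_ρ. -/

import Mathlib

noncomputable section

namespace StmtB

/-- `𝔽₂[a,u,c,b][v^{±1}]`, realized as the group algebra of `ℤ` (the exponent of `v`)
over `𝔽₂[a,u,c,b]`. -/
abbrev BL : Type := AddMonoidAlgebra (MvPolynomial (Fin 4) (ZMod 2)) ℤ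

def aL : BL := AddMonoidAlgebra.single 0 (MvPolynomial.X 0)
def uL : BL := AddMonoidAlgebra.single 0 (MvPolynomial.X 1)
def cL : BL := AddMonoidAlgebra.single 0 (MvPolynomial.X 2)
def bL : BL := AddMonoidAlgebra.single 0 (MvPolynomial.X 3)

/-- `B = 𝔽₂[a,u][v,v⁻¹][c,b]/(c² + a·c + u·b)`. -/
abbrev B : Type := BL ⧸ Ideal.span ({cL ^ 2 + aL * cL + uL * bL} : Set BL)

def q : BL →+* B := Ideal.Quotient.mk _

def a : B := q aL
def u : B := q uL
def c : B := q cL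
def b : B := q bL
/-- `v` -/
def v : B := q (AddMonoidAlgebra.single 1 1)
/-- `v⁻¹` -/
def vInv : B := q (AddMonoidAlgebra.single (-1) 1)

/-- `ē_a = v·(a·b + b·c)` -/
def ebarA : B := v * (a * b + b * c)
/-- `ē_u = v·u·c` -/
def ebarU : B := v * u * c
/-- `ē_λ = a·c + u·b` -/
def ebarL : B := a * c + u * b
/-- `ē_ρ = v·b²` -/
def ebarR : B := v * b ^ 2

end StmtB

end
set_option maxHeartbeats 2000000 in
/-- In `B`: `ē_λ² = u²·v⁻¹·ē_ρ + a²·ē_λ` and `ē_a² = v·ē_λ·ē_ρ + v·a²·ē_ρ`. -/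
theorem stmt14 : StmtB.ebarL ^ 2 = StmtB.u ^ 2 * StmtB.vInv * StmtB.ebarR +
      StmtB.a ^ 2 * StmtB.ebarL ∧
    StmtB.ebarA ^ 2 = StmtB.v * StmtB.ebarL * StmtB.ebarR +
      StmtB.v * StmtB.a ^ 2 * StmtB.ebarR := by
  have hc : StmtB.c ^ 2 + StmtB.a * StmtB.c + StmtB.u * StmtB.b = 0 := by
    have : StmtB.q (StmtB.cL ^ 2 + StmtB.aL * StmtB.cL + StmtB.uL * StmtB.bL) = 0 :=
      Ideal.Quotient.eq_zero_iff_mem.mpr (Ideal.mem_span_singleton_self _)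
    simpa [StmtB.a, StmtB.u, StmtB.c, StmtB.b, map_add, map_mul, map_pow] using this
  have hv : StmtB.v * StmtB.vInv = 1 := by
    rw [StmtB.v, StmtB.vInv, ← map_mul, AddMonoidAlgebra.single_mul_single]
    norm_num [← AddMonoidAlgebra.one_def]
  have h2 : (2 : StmtB.B) = 0 := by
    have hbl : (2 : StmtB.BL) = 0 := by
      rw [← one_add_one_eq_two, AddMonoidAlgebra.one_def, ← AddMonoidAlgebra.single_add]
      have : (1 + 1 : MvPolynomial (Fin 4) (ZMod 2)) = 0 := by
        rw [one_add_one_eq_two]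
        exact_mod_cast CharP.cast_eq_zero (MvPolynomial (Fin 4) (ZMod 2)) 2
      rw [this, AddMonoidAlgebra.single_zero]
    rw [show (2 : StmtB.B) = StmtB.q 2 from (map_ofNat StmtB.q 2).symm, hbl, map_zero]
  constructor
  · unfold StmtB.ebarL StmtB.ebarR
    linear_combination StmtB.a ^ 2 * hc - StmtB.u ^ 2 * StmtB.b ^ 2 * hv +
      (StmtB.a * StmtB.c * StmtB.u * StmtB.b - StmtB.a ^ 3 * StmtB.c -
        StmtB.a ^ 2 * StmtB.u * StmtB.b) * h2
  · unfold StmtB.ebarA StmtB.ebarL StmtB.ebarR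
    linear_combination StmtB.v ^ 2 * StmtB.b ^ 2 * hc - StmtB.v ^ 2 * StmtB.u * StmtB.b ^ 3 * h2
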